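/- The action of the symplectic group Sp(2g, ℤ) on the set of surjective homomorphisms (ℤ/nℤ)-valued on ℤ^{2g} is transitive: for any n ≥ 2, any two surjective group homomorphisms ℤ^{2g} → ℤ/nℤ are related by precomposition with an element of Sp(2g, ℤ). -/

import Mathlib

open Matrix

set_option linter.unusedSectionVars false

namespace SpAux

variable {g : ℕ} [NeZero g]

lemma mem_blocks (A B C D : Matrix (Fin g) (Fin g) ℤ)
    (h1 : B * Aᵀ = A * Bᵀ) (h2 : A * Dᵀ - B * Cᵀ = 1) (h3 : D * Cᵀ = C * Dᵀ)
    (h4 : D * Aᵀ - C * Bᵀ = 1) :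
    fromBlocks A B C D ∈ Matrix.symplecticGroup (Fin g) ℤ := by
  rw [SymplecticGroup.mem_iff, Matrix.J, fromBlocks_transpose, fromBlocks_multiply,
    fromBlocks_multiply]
  simp only [Matrix.mul_neg, Matrix.mul_one, Matrix.mul_zero, add_zero, zero_add,
    Matrix.zero_mul, Matrix.neg_mul, Matrix.add_mul]
  have e1 : B * Aᵀ + -(A * Bᵀ) = 0 := by rw [h1, add_neg_cancel]
  have e2 : B * Cᵀ + -(A * Dᵀ) = -1 := by rw [← h2]; abel
  have e3 : D * Aᵀ + -(C * Bᵀ) = 1 := by rw [← h4]; abel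
  have e4 : D * Cᵀ + -(C * Dᵀ) = 0 := by rw [h3, add_neg_cancel]
  rw [e1, e2, e3, e4]

/-- a symmetric matrix supported on the first row and column -/
def Cmat (c : Fin g → ℤ) : Matrix (Fin g) (Fin g) ℤ :=
  Matrix.of fun i j => if i = 0 then c j else if j = 0 then c i else 0

lemma Cmat_transpose (c : Fin g → ℤ) : (Cmat c)ᵀ = Cmat c := by
  ext i j
  simp only [transpose_apply, Cmat, of_apply]
  by_cases hi : i = 0 <;> by_cases hj : j = 0 <;> simp [hi, hj]

lemma Cmat_mulVec (c x : Fin g → ℤ) :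
    (Cmat c).mulVec x = fun i => if i = 0 then ∑ j, c j * x j else c i * x 0 := by
  funext i
  simp only [Cmat, mulVec, dotProduct, of_apply]
  by_cases hi : i = 0
  · simp [hi]
  · simp only [hi, if_false, ite_mul, zero_mul]
    rw [Finset.sum_ite_eq' Finset.univ (0 : Fin g) (fun j => c i * x j)]
    simp

lemma mem_upper (c : Fin g → ℤ) :
    fromBlocks 1 (Cmat c) 0 1 ∈ Matrix.symplecticGroup (Fin g) ℤ := by
  apply mem_blocks <;>
    simp [Cmat_transpose, transpose_one, Matrix.mul_one, Matrix.one_mul]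

lemma mem_lower (c : Fin g → ℤ) :
    fromBlocks 1 0 (Cmat c) 1 ∈ Matrix.symplecticGroup (Fin g) ℤ := by
  apply mem_blocks <;>
    simp [Cmat_transpose, transpose_one, Matrix.mul_one, Matrix.one_mul]

lemma mem_diag (A B : Matrix (Fin g) (Fin g) ℤ) (hAB : A * B = 1) :
    fromBlocks A 0 0 Bᵀ ∈ Matrix.symplecticGroup (Fin g) ℤ := by
  apply mem_blocks
  · simp
  · simp only [transpose_transpose, Matrix.zero_mul, sub_zero, hAB]
  · simp
  · rw [Matrix.zero_mul, sub_zero, ← transpose_mul, hAB, transpose_one]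

lemma mem_4diag (p q r s : Fin g → ℤ) (h : ∀ i, p i * s i - q i * r i = 1) :
    fromBlocks (diagonal p) (diagonal q) (diagonal r) (diagonal s) ∈
      Matrix.symplecticGroup (Fin g) ℤ := by
  apply mem_blocks
  · rw [diagonal_transpose, diagonal_transpose, diagonal_mul_diagonal, diagonal_mul_diagonal]
    have : (fun i => q i * p i) = fun i => p i * q i := funext fun i => mul_comm _ _
    rw [this]
  · rw [diagonal_transpose, diagonal_transpose, diagonal_mul_diagonal, diagonal_mul_diagonal]
    ext i j
    by_cases hij : i = j
    · subst hij; simp [Matrix.sub_apply, h i]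
    · simp [Matrix.sub_apply, diagonal_apply_ne _ hij, Matrix.one_apply_ne hij]
  · rw [diagonal_transpose, diagonal_transpose, diagonal_mul_diagonal, diagonal_mul_diagonal]
    have : (fun i => s i * r i) = fun i => r i * s i := funext fun i => mul_comm _ _
    rw [this]
  · rw [diagonal_transpose, diagonal_transpose, diagonal_mul_diagonal, diagonal_mul_diagonal]
    ext i j
    by_cases hij : i = j
    · subst hij
      simp only [Matrix.sub_apply, diagonal_apply_eq, Matrix.one_apply_eq]
      rw [mul_comm (s i), mul_comm (r i)]
      exact h i
    · simp [Matrix.sub_apply, diagonal_apply_ne _ hij, Matrix.one_apply_ne hij]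


/-- nilpotent part supported on column 0, off-diagonal -/
def Nmat (lam : Fin g → ℤ) : Matrix (Fin g) (Fin g) ℤ :=
  Matrix.of fun i j => if j = 0 ∧ ¬ i = 0 then lam i else 0

def Lmat (lam : Fin g → ℤ) : Matrix (Fin g) (Fin g) ℤ := 1 + Nmat lam

lemma Nmat_mul (lam mu : Fin g → ℤ) : Nmat lam * Nmat mu = 0 := by
  ext i j
  simp only [Matrix.mul_apply, Nmat, of_apply, Matrix.zero_apply]
  apply Finset.sum_eq_zero
  intro k _
  by_cases hk : k = 0 <;> simp [hk]

lemma Nmat_add (lam mu : Fin g → ℤ) : Nmat lam + Nmat mu = Nmat (lam + mu) := by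
  ext i j
  simp only [Matrix.add_apply, Nmat, of_apply, Pi.add_apply]
  split_ifs <;> simp

lemma Lmat_mul_Lmat (lam : Fin g → ℤ) : Lmat lam * Lmat (-lam) = 1 := by
  simp only [Lmat, add_mul, mul_add, Matrix.one_mul, Matrix.mul_one, Nmat_mul]
  rw [add_zero, add_assoc, Nmat_add]
  have : Nmat (g := g) (lam + -lam) = 0 := by ext i j; simp [Nmat]
  rw [this, add_zero]

lemma Nmat_mulVec (lam x : Fin g → ℤ) :
    (Nmat lam).mulVec x = fun i => if i = 0 then 0 else lam i * x 0 := by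
  funext i
  simp only [Nmat, mulVec, dotProduct, of_apply]
  by_cases hi : i = 0
  · simp [hi]
  · simp only [hi, not_false_iff, and_true, ite_mul, zero_mul, if_neg]
    rw [Finset.sum_ite_eq' Finset.univ (0 : Fin g) (fun j => lam i * x j)]
    simp

lemma Lmat_mulVec (lam x : Fin g → ℤ) :
    (Lmat lam).mulVec x = fun i => x i + if i = 0 then 0 else lam i * x 0 := by
  funext i
  simp [Lmat, Matrix.add_mulVec, Matrix.one_mulVec, Nmat_mulVec]

lemma Nmat_transpose_mulVec (lam y : Fin g → ℤ) :
    (Nmat lam)ᵀ.mulVec y = fun i => if i = 0 then ∑ j, (if j = 0 then 0 else lam j * y j) else 0 := by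
  funext i
  simp only [Nmat, mulVec, dotProduct, transpose_apply, of_apply]
  by_cases hi : i = 0
  · subst hi
    simp only [if_pos rfl, true_and]
    apply Finset.sum_congr rfl
    intro j _
    by_cases hj : j = 0 <;> simp [hj, mul_comm]
  · rw [if_neg hi]
    apply Finset.sum_eq_zero
    intro k _
    simp [hi]

lemma Lmat_transpose_mulVec (lam y : Fin g → ℤ) :
    (Lmat lam)ᵀ.mulVec y =
      fun i => y i + if i = 0 then ∑ j, (if j = 0 then 0 else lam j * y j) else 0 := by
  funext i
  simp [Lmat, transpose_add, transpose_one, Matrix.add_mulVec, Matrix.one_mulVec,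
    Nmat_transpose_mulVec]

lemma mem_Lmat_blocks (lam : Fin g → ℤ) :
    fromBlocks (Lmat lam) 0 0 ((Lmat (-lam))ᵀ) ∈ Matrix.symplecticGroup (Fin g) ℤ :=
  mem_diag _ _ (Lmat_mul_Lmat lam)



lemma bezout_pair (x y : ℤ) :
    ∃ p q r s d u v : ℤ, p * s - q * r = 1 ∧ x = d * u ∧ y = d * v ∧
      p * x + q * y = d ∧ r * x + s * y = 0 := by
  by_cases hx : x = 0 ∧ y = 0
  · exact ⟨1, 0, 0, 1, 0, 0, 0, by ring, by rw [hx.1]; ring, by rw [hx.2]; ring,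
      by rw [hx.1, hx.2]; ring, by rw [hx.1, hx.2]; ring⟩
  · set d : ℤ := (Int.gcd x y : ℤ) with hd
    have hd0 : d ≠ 0 := by
      simp only [hd, ne_eq, Int.natCast_eq_zero, Int.gcd_eq_zero_iff]
      tauto
    obtain ⟨u, hu⟩ : d ∣ x := Int.gcd_dvd_left x y
    obtain ⟨v, hv⟩ : d ∣ y := Int.gcd_dvd_right x y
    refine ⟨Int.gcdA x y, Int.gcdB x y, -v, u, d, u, v, ?_, hu, hv, ?_, ?_⟩
    · have h1 : d = x * Int.gcdA x y + y * Int.gcdB x y := Int.gcd_eq_gcd_ab x y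
      have h2 : d * (Int.gcdA x y * u + Int.gcdB x y * v) = d * 1 := by
        rw [mul_one]
        calc d * (Int.gcdA x y * u + Int.gcdB x y * v)
            = x * Int.gcdA x y + y * Int.gcdB x y := by rw [hu, hv]; ring
          _ = d := h1.symm
      have := mul_left_cancel₀ hd0 h2
      nlinarith [this]
    · have h1 : d = x * Int.gcdA x y + y * Int.gcdB x y := Int.gcd_eq_gcd_ab x y
      linarith [h1]
    · rw [hu, hv]; ring


lemma step (a : (Fin g ⊕ Fin g) → ℤ) (P : ((Fin g ⊕ Fin g) → ℤ) → Prop)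
    (M : Matrix (Fin g ⊕ Fin g) (Fin g ⊕ Fin g) ℤ) (hM : M ∈ Matrix.symplecticGroup (Fin g) ℤ)
    (h : ∃ N ∈ Matrix.symplecticGroup (Fin g) ℤ, P (N.mulVec (M.mulVec a))) :
    ∃ N ∈ Matrix.symplecticGroup (Fin g) ℤ, P (N.mulVec a) := by
  obtain ⟨N, hN, hP⟩ := h
  exact ⟨N * M, mul_mem hN hM, by rwa [← Matrix.mulVec_mulVec]⟩

lemma phase1 (a : (Fin g ⊕ Fin g) → ℤ) :
    ∃ M ∈ Matrix.symplecticGroup (Fin g) ℤ, ∃ d u v : Fin g → ℤ,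
      M.mulVec a = Sum.elim d 0 ∧
      ∀ i, a (Sum.inl i) = d i * u i ∧ a (Sum.inr i) = d i * v i := by
  have hbez : ∀ i : Fin g, ∃ p q r s d u v : ℤ,
      p * s - q * r = 1 ∧ a (Sum.inl i) = d * u ∧ a (Sum.inr i) = d * v ∧
      p * a (Sum.inl i) + q * a (Sum.inr i) = d ∧ r * a (Sum.inl i) + s * a (Sum.inr i) = 0 :=
    fun i => bezout_pair _ _
  choose p q r s d u v h1 h2 h3 h4 h5 using hbez
  refine ⟨fromBlocks (diagonal p) (diagonal q) (diagonal r) (diagonal s),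
    mem_4diag p q r s h1, d, u, v, ?_, fun i => ⟨h2 i, h3 i⟩⟩
  have ha : a = Sum.elim (fun i => a (Sum.inl i)) (fun i => a (Sum.inr i)) := by
    funext j; cases j <;> rfl
  rw [ha, fromBlocks_mulVec]
  funext j
  cases j with
  | inl i =>
    simp only [Sum.elim_inl, Pi.add_apply, mulVec_diagonal]
    simpa using h4 i
  | inr i =>
    simp only [Sum.elim_inr, Pi.add_apply, mulVec_diagonal, Pi.zero_apply]
    simpa using h5 i

lemma phase2 {n : ℕ} [NeZero n] (d : Fin g → ℤ) (c : Fin g → ZMod n)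
    (hc : ∑ i, c i * (d i : ZMod n) = 1) :
    ∃ M ∈ Matrix.symplecticGroup (Fin g) ℤ,
      ∀ j, (((M.mulVec (Sum.elim d 0)) j : ℤ) : ZMod n) =
        if j = Sum.inl 0 then 1 else 0 := by
  have hlift : ∀ i : Fin g, ∃ z : ℤ, (z : ZMod n) = c i - (if i = 0 then 1 else 0) :=
    fun i => ZMod.intCast_surjective _
  choose c' hc' using hlift
  set y₁ : Fin g → ℤ := fun i => if i = 0 then ∑ j, c' j * d j else c' i * d 0 with hy₁
  set x₂ : Fin g → ℤ := fun i => d i + if i = 0 then y₁ 0 else 0 with hx₂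
  set lam : Fin g → ℤ := fun i => -(d i) with hlam
  set x₃ : Fin g → ℤ := fun i => x₂ i + if i = 0 then 0 else lam i * x₂ 0 with hx₃
  set y₃ : Fin g → ℤ := fun i => y₁ i + if i = 0 then ∑ j, (if j = 0 then 0 else (-lam) j * y₁ j) else 0 with hy₃
  set y₄ : Fin g → ℤ := fun i => y₃ i + if i = 0 then ∑ j, (fun k => -(y₃ k)) j * x₃ j else (fun k => -(y₃ k)) i * x₃ 0 with hy₄
  have hx20 : ((x₂ 0 : ℤ) : ZMod n) = 1 := by
    have : x₂ 0 = d 0 + ∑ j, c' j * d j := by simp [hx₂, hy₁]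
    rw [this]
    push_cast
    have : ∑ j, ((c' j : ZMod n)) * ((d j : ℤ) : ZMod n)
        = ∑ j, (c j * (d j : ZMod n) - (if j = 0 then 1 else 0) * (d j : ZMod n)) := by
      refine Finset.sum_congr rfl fun j _ => ?_
      rw [hc' j]; ring
    rw [this, Finset.sum_sub_distrib, hc]
    simp only [ite_mul, one_mul, zero_mul]
    rw [Finset.sum_ite_eq' Finset.univ (0 : Fin g) (fun j => ((d j : ℤ) : ZMod n))]
    simp
  have hx30 : ((x₃ 0 : ℤ) : ZMod n) = 1 := by
    have : x₃ 0 = x₂ 0 := by simp [hx₃]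
    rw [this, hx20]
  have hx3i : ∀ i : Fin g, i ≠ 0 → ((x₃ i : ℤ) : ZMod n) = 0 := by
    intro i hi
    have : x₃ i = d i + (-(d i)) * x₂ 0 := by simp [hx₃, hx₂, hlam, hi]
    rw [this]
    push_cast
    rw [hx20]
    ring
  have hy4 : ∀ i : Fin g, ((y₄ i : ℤ) : ZMod n) = 0 := by
    intro i
    by_cases hi : i = 0
    · subst hi
      have : y₄ 0 = y₃ 0 + ∑ j, -(y₃ j) * x₃ j := by simp [hy₄]
      rw [this]
      push_cast
      have hsum : ∑ j, -(((y₃ j : ℤ) : ZMod n)) * ((x₃ j : ℤ) : ZMod n)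
          = -(((y₃ 0 : ℤ) : ZMod n)) * ((x₃ 0 : ℤ) : ZMod n) := by
        apply Finset.sum_eq_single_of_mem _ (Finset.mem_univ _)
        intro j _ hj
        rw [hx3i j hj]
        ring
      rw [hsum, hx30]
      ring
    · have : y₄ i = y₃ i + (-(y₃ i)) * x₃ 0 := by simp [hy₄, hi]
      rw [this]
      push_cast
      rw [hx30]
      ring
  apply step (Sum.elim d 0) (fun w : (Fin g ⊕ Fin g) → ℤ => ∀ j, ((w j : ℤ) : ZMod n) = if j = Sum.inl 0 then (1 : ZMod n) else 0) _ (mem_lower c')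
  have e1 : ((fromBlocks 1 0 (Cmat c') 1 : Matrix (Fin g ⊕ Fin g) (Fin g ⊕ Fin g) ℤ)).mulVec (Sum.elim d 0) = Sum.elim d y₁ := by
    rw [fromBlocks_mulVec]
    simp only [Sum.elim_comp_inl, Sum.elim_comp_inr, Matrix.one_mulVec, Matrix.zero_mulVec,
      Matrix.mulVec_zero, add_zero, zero_add, Cmat_mulVec]
    rfl
  rw [e1]
  apply step (Sum.elim d y₁) (fun w : (Fin g ⊕ Fin g) → ℤ => ∀ j, ((w j : ℤ) : ZMod n) = if j = Sum.inl 0 then (1 : ZMod n) else 0) _ (mem_upper (fun j => if j = 0 then (1 : ℤ) else 0))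
  have e2 : ((fromBlocks 1 (Cmat (fun j => if j = 0 then (1:ℤ) else 0)) 0 1 : Matrix (Fin g ⊕ Fin g) (Fin g ⊕ Fin g) ℤ)).mulVec
      (Sum.elim d y₁) = Sum.elim x₂ y₁ := by
    rw [fromBlocks_mulVec]
    funext j
    cases j with
    | inl i =>
      simp only [Sum.elim_comp_inl, Sum.elim_comp_inr, Matrix.one_mulVec, Matrix.zero_mulVec,
        Matrix.mulVec_zero, add_zero, zero_add, Cmat_mulVec, Sum.elim_inl, Pi.add_apply]
      by_cases hi : i = 0
      · subst hi
        simp only [if_pos rfl, ite_mul, one_mul, zero_mul, hx₂]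
        rw [Finset.sum_ite_eq' Finset.univ (0 : Fin g) y₁]
        simp
      · simp [hi, hx₂]
    | inr i =>
      simp only [Sum.elim_comp_inl, Sum.elim_comp_inr, Matrix.one_mulVec, Matrix.zero_mulVec,
        Matrix.mulVec_zero, add_zero, zero_add, Sum.elim_inr]
  rw [e2]
  apply step (Sum.elim x₂ y₁) (fun w : (Fin g ⊕ Fin g) → ℤ => ∀ j, ((w j : ℤ) : ZMod n) = if j = Sum.inl 0 then (1 : ZMod n) else 0) _ (mem_Lmat_blocks lam)
  have e3 : ((fromBlocks (Lmat lam) 0 0 ((Lmat (-lam))ᵀ) : Matrix (Fin g ⊕ Fin g) (Fin g ⊕ Fin g) ℤ)).mulVec (Sum.elim x₂ y₁)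
      = Sum.elim x₃ y₃ := by
    rw [fromBlocks_mulVec]
    simp only [Sum.elim_comp_inl, Sum.elim_comp_inr, Matrix.zero_mulVec, Matrix.mulVec_zero,
      add_zero, zero_add, Lmat_mulVec, Lmat_transpose_mulVec]
    rfl
  rw [e3]
  apply step (Sum.elim x₃ y₃) (fun w : (Fin g ⊕ Fin g) → ℤ => ∀ j, ((w j : ℤ) : ZMod n) = if j = Sum.inl 0 then (1 : ZMod n) else 0) _ (mem_lower (fun k => -(y₃ k)))
  have e4 : ((fromBlocks 1 0 (Cmat (fun k => -(y₃ k))) 1 : Matrix (Fin g ⊕ Fin g) (Fin g ⊕ Fin g) ℤ)).mulVec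
      (Sum.elim x₃ y₃) = Sum.elim x₃ y₄ := by
    rw [fromBlocks_mulVec]
    funext j
    cases j with
    | inl i =>
      simp only [Sum.elim_comp_inl, Sum.elim_comp_inr, Matrix.one_mulVec, Matrix.zero_mulVec,
        Matrix.mulVec_zero, add_zero, zero_add, Sum.elim_inl]
    | inr i =>
      simp only [Sum.elim_comp_inl, Sum.elim_comp_inr, Matrix.one_mulVec, Matrix.zero_mulVec,
        Matrix.mulVec_zero, add_zero, zero_add, Cmat_mulVec, Sum.elim_inr, Pi.add_apply, hy₄]
      rw [add_comm]
  rw [e4]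
  refine ⟨1, one_mem _, ?_⟩
  rw [Matrix.one_mulVec]
  intro j
  cases j with
  | inl i =>
    by_cases hi : i = 0
    · subst hi
      simpa using hx30
    · simp only [Sum.elim_inl, Sum.inl.injEq, hi, if_false]
      exact hx3i i hi
  | inr i =>
    simp only [Sum.elim_inr]
    have : (Sum.inr i : Fin g ⊕ Fin g) ≠ Sum.inl 0 := by simp
    rw [if_neg this]
    exact hy4 i


-- representation of an AddMonoidHom on ℤ^I
lemma hom_rep {I : Type*} [Fintype I] [DecidableEq I] {n : ℕ}
    (f : (I → ℤ) →+ ZMod n) (v : I → ℤ) :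
    f v = ∑ j, ((v j : ℤ) : ZMod n) * f (Pi.single j 1) := by
  have hv : v = ∑ j, (v j) • Pi.single j (1 : ℤ) := by
    conv_lhs => rw [← Finset.univ_sum_single v]
    refine Finset.sum_congr rfl fun j _ => ?_
    rw [← Pi.single_smul, smul_eq_mul, mul_one]
  conv_lhs => rw [hv]
  rw [map_sum]
  refine Finset.sum_congr rfl fun j _ => ?_
  rw [map_zsmul, zsmul_eq_mul]

lemma cast_mulVec {I : Type*} [Fintype I] {n : ℕ} (N : Matrix I I ℤ) (x : I → ℤ) (j : I) :
    (((N.mulVec x) j : ℤ) : ZMod n) = ∑ k, ((N j k : ℤ) : ZMod n) * ((x k : ℤ) : ZMod n) := by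
  simp only [mulVec, dotProduct]
  push_cast
  rfl


lemma reduce {n : ℕ} [NeZero n] (a : (Fin g ⊕ Fin g) → ℤ)
    (h : ∃ c : (Fin g ⊕ Fin g) → ZMod n, ∑ j, c j * (a j : ZMod n) = 1) :
    ∃ M ∈ Matrix.symplecticGroup (Fin g) ℤ,
      ∀ j, (((M.mulVec a) j : ℤ) : ZMod n) = if j = Sum.inl 0 then 1 else 0 := by
  obtain ⟨c, hc⟩ := h
  obtain ⟨M₁, hM₁, d, u, v, hM₁a, hduv⟩ := phase1 a
  have hd : ∑ i, (c (Sum.inl i) * (u i : ZMod n) + c (Sum.inr i) * (v i : ZMod n))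
      * (d i : ZMod n) = 1 := by
    rw [← hc, Fintype.sum_sum_type, ← Finset.sum_add_distrib]
    refine Finset.sum_congr rfl fun i _ => ?_
    rw [(hduv i).1, (hduv i).2]
    push_cast
    ring
  obtain ⟨M₂, hM₂, h2⟩ := phase2 d _ hd
  refine ⟨M₂ * M₁, mul_mem hM₂ hM₁, fun j => ?_⟩
  rw [← Matrix.mulVec_mulVec, hM₁a]
  exact h2 j

end SpAux

/-- The action of `Sp(2g, ℤ)` by precomposition on surjective homomorphisms
`ℤ^{2g} → ℤ/nℤ` is transitive. -/
theorem symplectic_transitive_on_surjections_to_cyclic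
    (g n : ℕ) (hn : 2 ≤ n)
    (f₁ f₂ : ((Fin g ⊕ Fin g) → ℤ) →+ ZMod n)
    (h₁ : Function.Surjective f₁) (h₂ : Function.Surjective f₂) :
    ∃ M ∈ Matrix.symplecticGroup (Fin g) ℤ,
      ∀ v : (Fin g ⊕ Fin g) → ℤ, f₂ v = f₁ (M.mulVec v) := by
  haveI : NeZero n := ⟨by omega⟩
  haveI : Fact (1 < n) := ⟨by omega⟩
  rcases Nat.eq_zero_or_pos g with hg | hg
  · exfalso
    subst hg
    obtain ⟨v, hv⟩ := h₁ 1
    have hv0 : v = 0 := by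
      funext j
      rcases j with i | i <;> exact i.elim0
    rw [hv0, map_zero] at hv
    exact one_ne_zero hv.symm
  haveI : NeZero g := ⟨by omega⟩
  -- integer covectors for f₁ and f₂
  have lift : ∀ (f : ((Fin g ⊕ Fin g) → ℤ) →+ ZMod n) (j : Fin g ⊕ Fin g),
      ∃ z : ℤ, (z : ZMod n) = f (Pi.single j 1) := fun f j => ZMod.intCast_surjective _
  choose a ha using lift f₁
  choose b hb using lift f₂
  have key : ∀ (f : ((Fin g ⊕ Fin g) → ℤ) →+ ZMod n) (w : (Fin g ⊕ Fin g) → ℤ)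
      (hw : ∀ j, ((w j : ℤ) : ZMod n) = f (Pi.single j 1)),
      Function.Surjective f →
      ∃ c : (Fin g ⊕ Fin g) → ZMod n, ∑ j, c j * ((w j : ℤ) : ZMod n) = 1 := by
    intro f w hw hf
    obtain ⟨u, hu⟩ := hf 1
    refine ⟨fun j => ((u j : ℤ) : ZMod n), ?_⟩
    rw [← hu, SpAux.hom_rep f u]
    refine Finset.sum_congr rfl fun j _ => ?_
    rw [hw j]
  obtain ⟨N₁, hN₁, hr₁⟩ := SpAux.reduce a (key f₁ a ha h₁)
  obtain ⟨N₂, hN₂, hr₂⟩ := SpAux.reduce b (key f₂ b hb h₂)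
  -- the symplectic element
  set S₁ : Matrix.symplecticGroup (Fin g) ℤ := ⟨N₁, hN₁⟩ with hS₁
  set S₂ : Matrix.symplecticGroup (Fin g) ℤ := ⟨N₂, hN₂⟩ with hS₂
  set K : Matrix (Fin g ⊕ Fin g) (Fin g ⊕ Fin g) ℤ := (S₂⁻¹).val with hK
  have hKmem : K ∈ Matrix.symplecticGroup (Fin g) ℤ := (S₂⁻¹).2
  have hKN₂ : K * N₂ = 1 := by
    have h := congrArg (Subtype.val) (inv_mul_cancel S₂)
    exact h
  refine ⟨(K * N₁)ᵀ, SymplecticGroup.transpose_mem (mul_mem hKmem hN₁), fun v => ?_⟩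
  -- key pointwise identity in ZMod n
  have hmat : ∀ k, ((b k : ℤ) : ZMod n) = ∑ j, (((K * N₁)ᵀ j k : ℤ) : ZMod n) * ((a j : ℤ) : ZMod n) := by
    intro k
    have e1 : ∀ j, (((N₁.mulVec a) j : ℤ) : ZMod n) = (((N₂.mulVec b) j : ℤ) : ZMod n) := by
      intro j
      rw [hr₁ j, hr₂ j]
    have e2 : (((K.mulVec (N₂.mulVec b)) k : ℤ) : ZMod n)
        = (((K.mulVec (N₁.mulVec a)) k : ℤ) : ZMod n) := by
      rw [SpAux.cast_mulVec, SpAux.cast_mulVec]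
      refine Finset.sum_congr rfl fun j _ => ?_
      rw [e1 j]
    have e3 : K.mulVec (N₂.mulVec b) = b := by
      rw [Matrix.mulVec_mulVec, hKN₂, Matrix.one_mulVec]
    rw [← e3]
    rw [e2, Matrix.mulVec_mulVec, SpAux.cast_mulVec]
    refine Finset.sum_congr rfl fun j _ => ?_
    rw [Matrix.transpose_apply]
  -- now conclude
  rw [SpAux.hom_rep f₂ v, SpAux.hom_rep f₁ ((K * N₁)ᵀ.mulVec v)]
  calc ∑ k, ((v k : ℤ) : ZMod n) * f₂ (Pi.single k 1)
      = ∑ k, ((v k : ℤ) : ZMod n) * ∑ j, (((K * N₁)ᵀ j k : ℤ) : ZMod n) * ((a j : ℤ) : ZMod n) := by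
        refine Finset.sum_congr rfl fun k _ => ?_
        rw [← hb k, hmat k]
    _ = ∑ j, ((((K * N₁)ᵀ.mulVec v) j : ℤ) : ZMod n) * ((a j : ℤ) : ZMod n) := by
        simp only [Finset.mul_sum]
        rw [Finset.sum_comm]
        refine Finset.sum_congr rfl fun j _ => ?_
        rw [SpAux.cast_mulVec, Finset.sum_mul]
        refine Finset.sum_congr rfl fun k _ => ?_
        ring
    _ = ∑ j, ((((K * N₁)ᵀ.mulVec v) j : ℤ) : ZMod n) * f₁ (Pi.single j 1) := by
        refine Finset.sum_congr rfl fun j _ => ?_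
        rw [ha j]
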